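/- Let K = k((t))((u)) be a two-dimensional local field with residue field K̄ = k((t)) (char k = 0). Then for any ξ ∈ K̄ with ν_t(ξ) ≥ 0, and any f, g ∈ K*: res_{K̄/k}(ξ · d(f,g)_K/(f,g)_K) = res_{K/k}(ξ · (df/f) ∧ (dg/g)), where (f,g)_K is the tame symbol with respect to the valuation in u, and res_{K/k}(Σ a_{i,j} t^i u^j dt∧du) = a_{−1,−1}. -/

import Mathlib

noncomputable section

abbrev LS (k : Type) [Field k] := LaurentSeries k
abbrev LS2 (k : Type) [Field k] := LaurentSeries (LaurentSeries k)

/-- Formal derivative of a Laurent series. -/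
def lsDeriv {R : Type} [AddCommGroup R] (f : LaurentSeries R) : LaurentSeries R where
  coeff n := (n + 1) • f.coeff (n + 1)
  isPWO_support' := by
    have h : (Function.support fun n : ℤ => (n + 1) • f.coeff (n + 1)) ⊆
        (fun n : ℤ => n - 1) '' (Function.support f.coeff) := by
      intro n hn
      refine ⟨n + 1, ?_, by ring⟩
      intro h0
      simp [Function.mem_support, h0] at hn
    exact (f.isPWO_support'.image_of_monotone
      (fun a b hab => by dsimp; omega : Monotone fun n : ℤ => n - 1)).mono h

lemma lsDeriv_zero {R : Type} [AddCommGroup R] : lsDeriv (0 : LaurentSeries R) = 0 := by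
  ext n
  simp [lsDeriv]

variable {k : Type} [Field k]

/-- ∂/∂u on k((u))((t)) (outer variable t, inner variable u): coefficientwise derivative. -/
def uDeriv (f : LS2 k) : LS2 k where
  coeff j := lsDeriv (f.coeff j)
  isPWO_support' := by
    refine f.isPWO_support'.mono ?_
    intro j hj
    simp only [Function.mem_support] at hj ⊢
    intro h0
    exact hj (by rw [h0, lsDeriv_zero])

/-- ∂/∂t on k((u))((t)): derivative in the outer variable. -/
def tDeriv (f : LS2 k) : LS2 k := lsDeriv f

/-- res_u : extracts the coefficient of u^(-1), giving a Laurent series in t. -/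
def resU (f : LS2 k) : LS k where
  coeff j := (f.coeff j).coeff (-1)
  isPWO_support' := by
    refine f.isPWO_support'.mono ?_
    intro j hj
    simp only [Function.mem_support] at hj ⊢
    intro h0
    exact hj (by rw [h0]; simp)

/-- One-dimensional residue: coefficient of τ^(-1). -/
def res1 (f : LS k) : k := f.coeff (-1)

/-- Two-dimensional residue: coefficient of u^(-1) t^(-1). -/
def res2 (f : LS2 k) : k := (f.coeff (-1)).coeff (-1)

/-- The embedding of k((t)) into k((u))((t)) (constants in u). -/
def ofT (g : LS k) : LS2 k where
  coeff j := HahnSeries.C (g.coeff j)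
  isPWO_support' := by
    refine g.isPWO_support'.mono ?_
    intro j hj
    simp only [Function.mem_support] at hj ⊢
    intro h0
    exact hj (by rw [h0, map_zero])

/-- The element u of k((u))((t)). -/
def uElem : LS2 k := HahnSeries.single 0 (HahnSeries.single 1 1)

/-- The element t of k((u))((t)). -/
def tElem : LS2 k := HahnSeries.single 1 1

/-- The coefficient of du ∧ dt in (dφ/φ) ∧ (dψ/ψ). -/
def wedge (φ ψ : LS2 k) : LS2 k :=
  (φ * ψ)⁻¹ * (uDeriv φ * tDeriv ψ - tDeriv φ * uDeriv ψ)

/-- Membership in the group of principal units E¹ = 1 + u·k[[u]] + t·k((u))[[t]]. -/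
def memE1 (φ : LS2 k) : Prop :=
  (∀ j < 0, φ.coeff j = 0) ∧ (∀ i < 0, (φ.coeff 0).coeff i = 0) ∧ (φ.coeff 0).coeff 0 = 1

/-- Membership in m = u·k[[u]] + t·k((u))[[t]]. -/
def memM (x : LS2 k) : Prop :=
  (∀ j < 0, x.coeff j = 0) ∧ (∀ i ≤ 0, (x.coeff 0).coeff i = 0)

/-- Partial sums of the logarithm series of φ = 1 + x. -/
def partialLog (φ : LS2 k) (n : ℕ) : LS2 k :=
  ∑ m ∈ Finset.Icc 1 n, ((-1 : LS2 k) ^ (m + 1) * (m : LS2 k)⁻¹) * (φ - 1) ^ m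

/-- `L` is the logarithm of `φ`: every coefficient of the partial sums of the log series
is eventually equal to the corresponding coefficient of `L` (convergence in the topology of
the two-dimensional local field). -/
def IsLogOf (φ L : LS2 k) : Prop :=
  ∀ a b : ℤ, ∃ N : ℕ, ∀ n ≥ N, ((partialLog φ n).coeff b).coeff a = (L.coeff b).coeff a

/-- Partial sums of the exponential series. -/
def partialExp (x : LS2 k) (n : ℕ) : LS2 k :=
  ∑ m ∈ Finset.range (n + 1), ((Nat.factorial m : LS2 k))⁻¹ * x ^ m

/-- `E` is the exponential of `x`, coefficientwise. -/
def IsExpOf (x E : LS2 k) : Prop :=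
  ∀ a b : ℤ, ∃ N : ℕ, ∀ n ≥ N, ((partialExp x n).coeff b).coeff a = (E.coeff b).coeff a

/-- Partial sums of the exponential series in the one-dimensional field k((t)). -/
def partialExp1 (x : LS k) (n : ℕ) : LS k :=
  ∑ m ∈ Finset.range (n + 1), ((Nat.factorial m : LS k))⁻¹ * x ^ m

/-- `E` is the exponential of `x` in k((t)), coefficientwise. -/
def IsExpOf1 (x E : LS k) : Prop :=
  ∀ a : ℤ, ∃ N : ℕ, ∀ n ≥ N, (partialExp1 x n).coeff a = E.coeff a

/-- The tame symbol of the local field k((t)). -/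
def tame1 (φ ψ : LS k) : k :=
  (-1 : k) ^ (φ.order * ψ.order) * (φ ^ ψ.order * ψ ^ (-φ.order)).coeff 0

/-- The tame symbol of K = k((t))((u)) with respect to the u-adic (outer) valuation,
with values in the residue field K̄ = k((t)). -/
def tame2 {k : Type} [Field k] (f g : LS2 k) : LS k :=
  (-1 : LS k) ^ (f.order * g.order) * (f ^ g.order * g ^ (-f.order)).coeff 0

/- ===== auxiliary development ===== -/

section AuxDeriv

open HahnSeries

variable {R : Type} [CommRing R]

lemma lsDeriv_coeff (f : LaurentSeries R) (n : ℤ) :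
    (lsDeriv f).coeff n = (n + 1) • f.coeff (n + 1) := rfl

lemma lsDeriv_add (f g : LaurentSeries R) :
    lsDeriv (f + g) = lsDeriv f + lsDeriv g := by
  ext n
  simp [lsDeriv_coeff, HahnSeries.coeff_add, smul_add]

lemma lsDeriv_support (f : LaurentSeries R) :
    (lsDeriv f).support ⊆ (fun n : ℤ => n - 1) '' f.support := by
  intro n hn
  rw [HahnSeries.mem_support, lsDeriv_coeff] at hn
  refine ⟨n + 1, ?_, by ring⟩
  rw [HahnSeries.mem_support]
  intro h0
  rw [h0, smul_zero] at hn
  exact hn rfl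

lemma pwo_shift {s : Set ℤ} (hs : s.IsPWO) : ((fun n : ℤ => n - 1) '' s).IsPWO :=
  hs.image_of_monotone
    (fun a b hab => by dsimp; omega : Monotone fun n : ℤ => n - 1)

lemma mul_coeff_subset {x y : LaurentSeries R} {s t : Set ℤ}
    (hs : s.IsPWO) (ht : t.IsPWO) (hxs : x.support ⊆ s) (hyt : y.support ⊆ t) (a : ℤ) :
    (x * y).coeff a = ∑ ij ∈ Finset.antidiagonal hs ht a, x.coeff ij.1 * y.coeff ij.2 := by
  rw [HahnSeries.coeff_mul_left' hs hxs]
  refine Finset.sum_subset (Finset.antidiagonal_mono_right hyt) ?_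
  intro p hp hnp
  rw [Finset.mem_antidiagonal] at hp hnp
  have h2 : y.coeff p.2 = 0 := by
    by_contra hc
    exact hnp ⟨hp.1, (HahnSeries.mem_support y p.2).mpr hc, hp.2.2⟩
  rw [h2, mul_zero]

lemma lsDeriv_mul (f g : LaurentSeries R) :
    lsDeriv (f * g) = lsDeriv f * g + f * lsDeriv g := by
  ext n
  have hf := f.isPWO_support
  have hg := g.isPWO_support
  have hf' := pwo_shift hf
  have hg' := pwo_shift hg
  rw [HahnSeries.coeff_add, lsDeriv_coeff,
    mul_coeff_subset hf' hg (lsDeriv_support f) (subset_refl _) n,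
    mul_coeff_subset hf hg' (subset_refl _) (lsDeriv_support g) n,
    HahnSeries.coeff_mul]
  have h1 : ∑ ij ∈ Finset.antidiagonal hf' hg n, (lsDeriv f).coeff ij.1 * g.coeff ij.2
      = ∑ ij ∈ Finset.antidiagonal hf hg (n + 1),
          (ij.1 • f.coeff ij.1) * g.coeff ij.2 := by
    refine Finset.sum_nbij' (fun p => (p.1 + 1, p.2)) (fun p => (p.1 - 1, p.2)) ?_ ?_ ?_ ?_ ?_
    · intro p hp
      simp only [Finset.mem_antidiagonal, Set.mem_image] at hp ⊢
      obtain ⟨⟨m, hm, hm'⟩, h2, h3⟩ := hp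
      refine ⟨?_, h2, by omega⟩
      have he : p.1 + 1 = m := by omega
      rwa [he]
    · intro p hp
      simp only [Finset.mem_antidiagonal, Set.mem_image] at hp ⊢
      exact ⟨⟨p.1, hp.1, by omega⟩, hp.2.1, by omega⟩
    · intro p _
      show (p.1 + 1 - 1, p.2) = p
      rw [show p.1 + 1 - 1 = p.1 from by omega]
    · intro p _
      show (p.1 - 1 + 1, p.2) = p
      rw [show p.1 - 1 + 1 = p.1 from by omega]
    · intro p _
      show (lsDeriv f).coeff p.1 * g.coeff p.2 = (p.1 + 1) • f.coeff (p.1 + 1) * g.coeff p.2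
      rw [lsDeriv_coeff]
  have h2 : ∑ ij ∈ Finset.antidiagonal hf hg' n, f.coeff ij.1 * (lsDeriv g).coeff ij.2
      = ∑ ij ∈ Finset.antidiagonal hf hg (n + 1),
          f.coeff ij.1 * (ij.2 • g.coeff ij.2) := by
    refine Finset.sum_nbij' (fun p => (p.1, p.2 + 1)) (fun p => (p.1, p.2 - 1)) ?_ ?_ ?_ ?_ ?_
    · intro p hp
      simp only [Finset.mem_antidiagonal, Set.mem_image] at hp ⊢
      obtain ⟨h1', ⟨m, hm, hm'⟩, h3⟩ := hp
      refine ⟨h1', ?_, by omega⟩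
      have he : p.2 + 1 = m := by omega
      rwa [he]
    · intro p hp
      simp only [Finset.mem_antidiagonal, Set.mem_image] at hp ⊢
      exact ⟨hp.1, ⟨p.2, hp.2.1, by omega⟩, by omega⟩
    · intro p _
      show (p.1, p.2 + 1 - 1) = p
      rw [show p.2 + 1 - 1 = p.2 from by omega]
    · intro p _
      show (p.1, p.2 - 1 + 1) = p
      rw [show p.2 - 1 + 1 = p.2 from by omega]
    · intro p _
      show f.coeff p.1 * (lsDeriv g).coeff p.2 = f.coeff p.1 * ((p.2 + 1) • g.coeff (p.2 + 1))
      rw [lsDeriv_coeff]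
  rw [h1, h2, ← Finset.sum_add_distrib, Finset.smul_sum]
  refine Finset.sum_congr rfl ?_
  intro p hp
  rw [Finset.mem_antidiagonal] at hp
  rw [smul_mul_assoc, mul_smul_comm, ← add_smul, hp.2.2]

lemma lsDeriv_one : lsDeriv (1 : LaurentSeries R) = 0 := by
  ext n
  rw [lsDeriv_coeff, HahnSeries.coeff_one, HahnSeries.coeff_zero]
  rcases eq_or_ne (n + 1) 0 with h | h
  · rw [if_pos h, h, zero_smul]
  · rw [if_neg h, smul_zero]

lemma lsDeriv_single (a : ℤ) (r : R) :
    lsDeriv (HahnSeries.single a r) = HahnSeries.single (a - 1) (a • r) := by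
  ext n
  rw [lsDeriv_coeff, HahnSeries.coeff_single, HahnSeries.coeff_single]
  rcases eq_or_ne n (a - 1) with h | h
  · have h' : n + 1 = a := by omega
    rw [if_pos h', if_pos h, h']
  · rw [if_neg (by omega : ¬ n + 1 = a), if_neg h, smul_zero]

lemma mul_coeff_neg_eq_zero {x y : LaurentSeries R}
    (hx : ∀ j < 0, x.coeff j = 0) (hy : ∀ j < 0, y.coeff j = 0) {n : ℤ} (hn : n < 0) :
    (x * y).coeff n = 0 := by
  rw [HahnSeries.coeff_mul]
  refine Finset.sum_eq_zero ?_
  intro p hp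
  rw [Finset.mem_antidiagonal] at hp
  rcases lt_or_ge p.1 0 with h | h
  · rw [hx _ h, zero_mul]
  · have h22 := hp.2.2
    rw [hy _ (by omega : p.2 < 0), mul_zero]

lemma mul_coeff_zero_eq {x y : LaurentSeries R}
    (hx : ∀ j < 0, x.coeff j = 0) (hy : ∀ j < 0, y.coeff j = 0) :
    (x * y).coeff 0 = x.coeff 0 * y.coeff 0 := by
  rw [HahnSeries.coeff_mul, Finset.sum_eq_single (0, 0)]
  · intro p hp hne
    rw [Finset.mem_antidiagonal] at hp
    exfalso
    have h1 : 0 ≤ p.1 := le_of_not_gt fun h =>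
      ((HahnSeries.mem_support x p.1).mp hp.1) (hx _ h)
    have h2 : 0 ≤ p.2 := le_of_not_gt fun h =>
      ((HahnSeries.mem_support y p.2).mp hp.2.1) (hy _ h)
    have h3 := hp.2.2
    exact hne (Prod.ext (by omega) (by omega))
  · intro h
    by_cases h0 : x.coeff 0 = 0
    · rw [h0, zero_mul]
    · have hy0 : y.coeff 0 = 0 := by
        by_contra hc
        exact h (Finset.mem_antidiagonal.mpr
          ⟨(HahnSeries.mem_support x 0).mpr h0, (HahnSeries.mem_support y 0).mpr hc,
            add_zero 0⟩)
      rw [hy0, mul_zero]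

lemma pow_coeff {x : LaurentSeries R} (hneg : ∀ j < 0, x.coeff j = 0) (m : ℕ) :
    (∀ j < 0, (x ^ m).coeff j = 0) ∧ (x ^ m).coeff 0 = (x.coeff 0) ^ m := by
  induction m with
  | zero =>
      constructor
      · intro j hj
        rw [pow_zero, HahnSeries.coeff_one, if_neg (by omega)]
      · rw [pow_zero, pow_zero, HahnSeries.coeff_one, if_pos rfl]
  | succ m ih =>
      constructor
      · intro j hj
        rw [pow_succ]
        exact mul_coeff_neg_eq_zero ih.1 hneg hj
      · rw [pow_succ, pow_succ, mul_coeff_zero_eq ih.1 hneg, ih.2]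

lemma lsDeriv_neg' (f : LaurentSeries R) :
    lsDeriv (-f) = - lsDeriv f := by
  ext n
  rw [HahnSeries.coeff_neg, lsDeriv_coeff, lsDeriv_coeff, HahnSeries.coeff_neg, smul_neg]

lemma lsDeriv_coeff_neg {f : LaurentSeries R} (hneg : ∀ j < 0, f.coeff j = 0) :
    ∀ j < 0, (lsDeriv f).coeff j = 0 := by
  intro j hj
  rw [lsDeriv_coeff]
  rcases eq_or_ne j (-1) with h | h
  · rw [h, show (-1 : ℤ) + 1 = 0 from by norm_num, zero_smul]
  · rw [hneg (j + 1) (by omega), smul_zero]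

end AuxDeriv

section AuxField

open HahnSeries

variable {K : Type} [Field K]

lemma dlog_mul {x y : LaurentSeries K} (hx : x ≠ 0) (hy : y ≠ 0) :
    lsDeriv (x * y) * (x * y)⁻¹ = lsDeriv x * x⁻¹ + lsDeriv y * y⁻¹ := by
  rw [lsDeriv_mul, mul_inv]
  linear_combination (lsDeriv x * x⁻¹) * mul_inv_cancel₀ hy +
    (lsDeriv y * y⁻¹) * mul_inv_cancel₀ hx

lemma dlog_inv {x : LaurentSeries K} (hx : x ≠ 0) :
    lsDeriv x⁻¹ * (x⁻¹)⁻¹ = -(lsDeriv x * x⁻¹) := by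
  have h := dlog_mul hx (inv_ne_zero hx)
  rw [mul_inv_cancel₀ hx, lsDeriv_one, zero_mul] at h
  linear_combination -h

lemma dlog_pow (x : LaurentSeries K) (hx : x ≠ 0) (n : ℕ) :
    lsDeriv (x ^ n) * (x ^ n)⁻¹ = n • (lsDeriv x * x⁻¹) := by
  induction n with
  | zero => simp [lsDeriv_one]
  | succ m ih => rw [pow_succ, dlog_mul (pow_ne_zero _ hx) hx, ih, succ_nsmul]

lemma dlog_zpow (x : LaurentSeries K) (hx : x ≠ 0) (n : ℤ) :
    lsDeriv (x ^ n) * (x ^ n)⁻¹ = n • (lsDeriv x * x⁻¹) := by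
  cases n with
  | ofNat m => rw [Int.ofNat_eq_coe, zpow_natCast, dlog_pow x hx m, natCast_zsmul]
  | negSucc m =>
      rw [zpow_negSucc, dlog_inv (pow_ne_zero _ hx), dlog_pow x hx (m + 1), negSucc_zsmul]

lemma inv_coeff {x : LaurentSeries K} (hx0 : x.coeff 0 ≠ 0) (hneg : ∀ j < 0, x.coeff j = 0) :
    (∀ j < 0, x⁻¹.coeff j = 0) ∧ x⁻¹.coeff 0 = (x.coeff 0)⁻¹ := by
  have hx : x ≠ 0 := fun h => hx0 (by rw [h, HahnSeries.coeff_zero])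
  have hord : x.order = 0 := le_antisymm (HahnSeries.order_le_of_coeff_ne_zero hx0)
    (le_of_not_gt fun h => (HahnSeries.coeff_order_eq_zero.not.mpr hx) (hneg _ h))
  have hxinv : x⁻¹ ≠ 0 := inv_ne_zero hx
  have hmul : x * x⁻¹ = 1 := mul_inv_cancel₀ hx
  have hordinv : x⁻¹.order = 0 := by
    have h := HahnSeries.order_mul hx hxinv
    rw [hmul, HahnSeries.order_one, hord, zero_add] at h
    exact h.symm
  have hinvneg : ∀ j < 0, x⁻¹.coeff j = 0 := fun j hj =>
    HahnSeries.coeff_eq_zero_of_lt_order (by rw [hordinv]; exact hj)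
  refine ⟨hinvneg, ?_⟩
  have h1 : (x * x⁻¹).coeff 0 = x.coeff 0 * x⁻¹.coeff 0 := mul_coeff_zero_eq hneg hinvneg
  rw [hmul, HahnSeries.coeff_one, if_pos rfl] at h1
  exact eq_inv_of_mul_eq_one_right h1.symm

lemma zpow_coeff {x : LaurentSeries K} (hx0 : x.coeff 0 ≠ 0) (hneg : ∀ j < 0, x.coeff j = 0)
    (n : ℤ) :
    (∀ j < 0, (x ^ n).coeff j = 0) ∧ (x ^ n).coeff 0 = (x.coeff 0) ^ n := by
  cases n with
  | ofNat m =>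
      rw [Int.ofNat_eq_coe, zpow_natCast, zpow_natCast]
      exact pow_coeff hneg m
  | negSucc m =>
      rw [zpow_negSucc, zpow_negSucc]
      have h := pow_coeff hneg (m + 1)
      have h0 : (x ^ (m + 1)).coeff 0 ≠ 0 := by rw [h.2]; exact pow_ne_zero _ hx0
      have hi := inv_coeff h0 h.1
      exact ⟨hi.1, by rw [hi.2, h.2]⟩

lemma single_one_inv (a : ℤ) :
    (HahnSeries.single a (1 : K))⁻¹ = HahnSeries.single (-a) 1 :=
  inv_eq_of_mul_eq_one_right (by
    rw [HahnSeries.single_mul_single, add_neg_cancel, one_mul, HahnSeries.single_zero_one])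

lemma single_one_pow (a : ℤ) (n : ℕ) :
    (HahnSeries.single a (1 : K)) ^ n = HahnSeries.single ((n : ℤ) * a) 1 := by
  induction n with
  | zero => rw [pow_zero, Nat.cast_zero, zero_mul, HahnSeries.single_zero_one]
  | succ m ih =>
      rw [pow_succ, ih, HahnSeries.single_mul_single, one_mul,
        show (m : ℤ) * a + a = ((m + 1 : ℕ) : ℤ) * a from by push_cast; ring]

lemma single_one_zpow (a n : ℤ) :
    (HahnSeries.single a (1 : K)) ^ n = HahnSeries.single (n * a) 1 := by
  cases n with
  | ofNat m => rw [Int.ofNat_eq_coe, zpow_natCast, single_one_pow]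
  | negSucc m =>
      rw [zpow_negSucc, single_one_pow, single_one_inv,
        show -(((m + 1 : ℕ) : ℤ) * a) = Int.negSucc m * a from by
          rw [Int.negSucc_eq]; push_cast; ring]

lemma smul_one_mul' (n : ℤ) (x : LaurentSeries K) :
    (n • (1 : LaurentSeries K)) * x = n • x := by
  rw [smul_mul_assoc, one_mul]

lemma neg_one_zpow_cases (n : ℤ) :
    ((-1 : LaurentSeries K) ^ n = 1) ∨ ((-1 : LaurentSeries K) ^ n = -1) := by
  have hnat : ∀ m : ℕ, ((-1 : LaurentSeries K) ^ m = 1) ∨ ((-1 : LaurentSeries K) ^ m = -1) := by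
    intro m
    induction m with
    | zero => left; rw [pow_zero]
    | succ p ih =>
        rcases ih with h | h
        · right; rw [pow_succ, h]; ring
        · left; rw [pow_succ, h]; ring
  cases n with
  | ofNat m => rw [Int.ofNat_eq_coe, zpow_natCast]; exact hnat m
  | negSucc m =>
      rw [zpow_negSucc]
      rcases hnat (m + 1) with h | h
      · left; rw [h, inv_one]
      · right; rw [h]; exact inv_eq_of_mul_eq_one_right (by ring)

lemma lsDeriv_neg_one_zpow (n : ℤ) : lsDeriv ((-1 : LaurentSeries K) ^ n) = 0 := by
  rcases neg_one_zpow_cases (K := K) n with h | h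
  · rw [h, lsDeriv_one]
  · rw [h, lsDeriv_neg', lsDeriv_one, neg_zero]

lemma neg_one_zpow_ne_zero (n : ℤ) : ((-1 : LaurentSeries K) ^ n) ≠ 0 := by
  rcases neg_one_zpow_cases (K := K) n with h | h
  · rw [h]; exact one_ne_zero
  · rw [h]; exact neg_ne_zero.mpr one_ne_zero

lemma final_comb (x y : LaurentSeries K) (aa bb : ℤ) :
    bb • x - aa • y + ((0 : LaurentSeries K) - 0) = bb • x + (-aa) • y := by
  rw [neg_smul]
  abel

end AuxField

section Aux2

open HahnSeries

variable {k : Type} [Field k]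

lemma uDeriv_coeff (f : LS2 k) (n : ℤ) : (uDeriv f).coeff n = lsDeriv (f.coeff n) := rfl

lemma uDeriv_support (f : LS2 k) : (uDeriv f).support ⊆ f.support := by
  intro n hn
  rw [HahnSeries.mem_support] at hn ⊢
  intro h0
  rw [uDeriv_coeff, h0, lsDeriv_zero] at hn
  exact hn rfl

lemma lsDeriv_sum {ι : Type} {s : Finset ι} (F : ι → LS k) :
    lsDeriv (∑ i ∈ s, F i) = ∑ i ∈ s, lsDeriv (F i) := by
  classical
  induction s using Finset.induction with
  | empty => simp [lsDeriv_zero]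
  | insert _ _ h ih => rw [Finset.sum_insert h, Finset.sum_insert h, lsDeriv_add, ih]

lemma uDeriv_mul (f g : LS2 k) : uDeriv (f * g) = uDeriv f * g + f * uDeriv g := by
  have key : ∀ n : ℤ, (uDeriv (f * g)).coeff n = (uDeriv f * g + f * uDeriv g).coeff n := by
    intro n
    rw [HahnSeries.coeff_add, uDeriv_coeff, HahnSeries.coeff_mul, lsDeriv_sum,
      mul_coeff_subset f.isPWO_support g.isPWO_support (uDeriv_support f) (subset_refl _) n,
      mul_coeff_subset f.isPWO_support g.isPWO_support (subset_refl _) (uDeriv_support g) n,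
      ← Finset.sum_add_distrib]
    exact Finset.sum_congr rfl fun p _ => by rw [lsDeriv_mul]; rfl
  exact HahnSeries.ext (funext key)

lemma uDeriv_single (a : ℤ) (r : LS k) :
    uDeriv (HahnSeries.single a r) = HahnSeries.single a (lsDeriv r) := by
  ext n
  rw [uDeriv_coeff, HahnSeries.coeff_single, HahnSeries.coeff_single]
  rcases eq_or_ne n a with h | h
  · rw [if_pos h, if_pos h]
  · rw [if_neg h, if_neg h, lsDeriv_zero]

end Aux2


open HahnSeries

variable {k : Type} [Field k]

set_option maxHeartbeats 2000000 in
lemma main_identity (f g : LS2 k) (hf : f ≠ 0) (hg : g ≠ 0) :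
    ((f * g)⁻¹ * (uDeriv f * lsDeriv g - lsDeriv f * uDeriv g)).coeff (-1)
      = lsDeriv (tame2 f g) * (tame2 f g)⁻¹ := by
  simp only [tame2]
  obtain ⟨a, ha⟩ : ∃ a, a = f.order := ⟨_, rfl⟩
  obtain ⟨b, hb⟩ : ∃ b, b = g.order := ⟨_, rfl⟩
  rw [← ha, ← hb]
  obtain ⟨F, hFdef⟩ : ∃ F : LS2 k, F = single (-a) 1 * f := ⟨_, rfl⟩
  obtain ⟨G, hGdef⟩ : ∃ G : LS2 k, G = single (-b) 1 * g := ⟨_, rfl⟩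
  have hUmul : ∀ c d : ℤ, (single c (1 : LS k)) * single d 1 = single (c + d) 1 := by
    intro c d; rw [HahnSeries.single_mul_single, one_mul]
  have hUone : ∀ c : ℤ, (single c (1 : LS k)) * single (-c) 1 = 1 := by
    intro c; rw [hUmul, add_neg_cancel, HahnSeries.single_zero_one]
  have hfF : f = single a 1 * F := by
    rw [hFdef]
    calc f = (1 : LS2 k) * f := by ring
      _ = (single a 1 * single (-a) 1) * f := by rw [hUone]
      _ = single a 1 * (single (-a) 1 * f) := by ring
  have hgG : g = single b 1 * G := by
    rw [hGdef]
    calc g = (1 : LS2 k) * g := by ring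
      _ = (single b 1 * single (-b) 1) * g := by rw [hUone]
      _ = single b 1 * (single (-b) 1 * g) := by ring
  -- coefficients of F and G
  have hFcoeff : ∀ m : ℤ, F.coeff m = f.coeff (m + a) := by
    intro m
    have h := HahnSeries.coeff_single_mul_add (r := (1 : LS k)) (x := f) (a := m + a) (b := -a)
    rw [one_mul] at h
    rw [hFdef]
    rw [show m + a + -a = m from by omega] at h
    exact h
  have hGcoeff : ∀ m : ℤ, G.coeff m = g.coeff (m + b) := by
    intro m
    have h := HahnSeries.coeff_single_mul_add (r := (1 : LS k)) (x := g) (a := m + b) (b := -b)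
    rw [one_mul] at h
    rw [hGdef]
    rw [show m + b + -b = m from by omega] at h
    exact h
  have hFneg : ∀ j < 0, F.coeff j = 0 := by
    intro j hj
    rw [hFcoeff]
    exact HahnSeries.coeff_eq_zero_of_lt_order (by rw [← ha]; omega)
  have hGneg : ∀ j < 0, G.coeff j = 0 := by
    intro j hj
    rw [hGcoeff]
    exact HahnSeries.coeff_eq_zero_of_lt_order (by rw [← hb]; omega)
  have hF0ne : F.coeff 0 ≠ 0 := by
    rw [hFcoeff 0, zero_add, ha]
    exact HahnSeries.coeff_order_eq_zero.not.mpr hf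
  have hG0ne : G.coeff 0 ≠ 0 := by
    rw [hGcoeff 0, zero_add, hb]
    exact HahnSeries.coeff_order_eq_zero.not.mpr hg
  have hFne : F ≠ 0 := fun h => hF0ne (by rw [h, HahnSeries.coeff_zero])
  have hGne : G ≠ 0 := fun h => hG0ne (by rw [h, HahnSeries.coeff_zero])
  -- basic inverse facts at level 2
  have hff : f * f⁻¹ = 1 := mul_inv_cancel₀ (G₀ := HahnSeries ℤ (HahnSeries ℤ k)) hf
  have hgg : g * g⁻¹ = 1 := mul_inv_cancel₀ (G₀ := HahnSeries ℤ (HahnSeries ℤ k)) hg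
  have hFF : F * F⁻¹ = 1 := mul_inv_cancel₀ (G₀ := HahnSeries ℤ (HahnSeries ℤ k)) hFne
  have hGG : G * G⁻¹ = 1 := mul_inv_cancel₀ (G₀ := HahnSeries ℤ (HahnSeries ℤ k)) hGne
  -- derivatives of f and g
  have huf : uDeriv f = single a 1 * uDeriv F := by
    conv_lhs => rw [hfF]
    rw [uDeriv_mul, uDeriv_single, lsDeriv_one, HahnSeries.single_eq_zero]
    ring
  have hug : uDeriv g = single b 1 * uDeriv G := by
    conv_lhs => rw [hgG]
    rw [uDeriv_mul, uDeriv_single, lsDeriv_one, HahnSeries.single_eq_zero]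
    ring
  have hlsf : lsDeriv f = single (a - 1) (a • (1 : LS k)) * F + single a 1 * lsDeriv F := by
    conv_lhs => rw [hfF]
    rw [lsDeriv_mul, lsDeriv_single]
  have hlsg : lsDeriv g = single (b - 1) (b • (1 : LS k)) * G + single b 1 * lsDeriv G := by
    conv_lhs => rw [hgG]
    rw [lsDeriv_mul, lsDeriv_single]
  have hfinv : f⁻¹ = single (-a) 1 * F⁻¹ := by
    refine inv_eq_of_mul_eq_one_right (G := HahnSeries ℤ (HahnSeries ℤ k)) ?_
    conv_lhs => rw [hfF]
    calc single a 1 * F * (single (-a) 1 * F⁻¹)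
        = (single a 1 * single (-a) 1) * (F * F⁻¹) := by ring
      _ = 1 := by rw [hUone, hFF]; ring
  have hginv : g⁻¹ = single (-b) 1 * G⁻¹ := by
    refine inv_eq_of_mul_eq_one_right (G := HahnSeries ℤ (HahnSeries ℤ k)) ?_
    conv_lhs => rw [hgG]
    calc single b 1 * G * (single (-b) 1 * G⁻¹)
        = (single b 1 * single (-b) 1) * (G * G⁻¹) := by ring
      _ = 1 := by rw [hUone, hGG]; ring
  have hAf : uDeriv f * f⁻¹ = uDeriv F * F⁻¹ := by
    rw [huf, hfinv]
    calc single a 1 * uDeriv F * (single (-a) 1 * F⁻¹)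
        = (single a 1 * single (-a) 1) * (uDeriv F * F⁻¹) := by ring
      _ = uDeriv F * F⁻¹ := by rw [hUone]; ring
  have hAg : uDeriv g * g⁻¹ = uDeriv G * G⁻¹ := by
    rw [hug, hginv]
    calc single b 1 * uDeriv G * (single (-b) 1 * G⁻¹)
        = (single b 1 * single (-b) 1) * (uDeriv G * G⁻¹) := by ring
      _ = uDeriv G * G⁻¹ := by rw [hUone]; ring
  have hBf : lsDeriv f * f⁻¹ = single (-1) (a • (1 : LS k)) + lsDeriv F * F⁻¹ := by
    rw [hlsf, hfinv]
    calc (single (a - 1) (a • (1 : LS k)) * F + single a 1 * lsDeriv F)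
          * (single (-a) 1 * F⁻¹)
        = (single (a - 1) (a • (1 : LS k)) * single (-a) 1) * (F * F⁻¹)
          + (single a 1 * single (-a) 1) * (lsDeriv F * F⁻¹) := by ring
      _ = single (-1) (a • (1 : LS k)) + lsDeriv F * F⁻¹ := by
          rw [HahnSeries.single_mul_single, show a - 1 + -a = -1 from by ring, mul_one,
            hUone, hFF]
          ring
  have hBg : lsDeriv g * g⁻¹ = single (-1) (b • (1 : LS k)) + lsDeriv G * G⁻¹ := by
    rw [hlsg, hginv]
    calc (single (b - 1) (b • (1 : LS k)) * G + single b 1 * lsDeriv G)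
          * (single (-b) 1 * G⁻¹)
        = (single (b - 1) (b • (1 : LS k)) * single (-b) 1) * (G * G⁻¹)
          + (single b 1 * single (-b) 1) * (lsDeriv G * G⁻¹) := by ring
      _ = single (-1) (b • (1 : LS k)) + lsDeriv G * G⁻¹ := by
          rw [HahnSeries.single_mul_single, show b - 1 + -b = -1 from by ring, mul_one,
            hUone, hGG]
          ring
  -- rewrite the wedge expression
  have hfginv : (f * g)⁻¹ = f⁻¹ * g⁻¹ := by
    refine inv_eq_of_mul_eq_one_right (G := HahnSeries ℤ (HahnSeries ℤ k)) ?_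
    calc f * g * (f⁻¹ * g⁻¹) = (f * f⁻¹) * (g * g⁻¹) := by ring
      _ = 1 := by rw [hff, hgg]; ring
  have hW : (f * g)⁻¹ * (uDeriv f * lsDeriv g - lsDeriv f * uDeriv g)
      = (uDeriv f * f⁻¹) * (lsDeriv g * g⁻¹) - (lsDeriv f * f⁻¹) * (uDeriv g * g⁻¹) := by
    rw [hfginv]; ring
  -- nonnegative-support facts
  have hFinv := inv_coeff hF0ne hFneg
  have hGinv := inv_coeff hG0ne hGneg
  have huFneg : ∀ j < 0, (uDeriv F).coeff j = 0 := fun j hj => by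
    rw [uDeriv_coeff, hFneg j hj, lsDeriv_zero]
  have huGneg : ∀ j < 0, (uDeriv G).coeff j = 0 := fun j hj => by
    rw [uDeriv_coeff, hGneg j hj, lsDeriv_zero]
  have hlFneg : ∀ j < 0, (lsDeriv F).coeff j = 0 := lsDeriv_coeff_neg hFneg
  have hlGneg : ∀ j < 0, (lsDeriv G).coeff j = 0 := lsDeriv_coeff_neg hGneg
  have hAFneg : ∀ j < 0, (uDeriv F * F⁻¹).coeff j = 0 := fun j hj =>
    mul_coeff_neg_eq_zero huFneg hFinv.1 hj
  have hAGneg : ∀ j < 0, (uDeriv G * G⁻¹).coeff j = 0 := fun j hj =>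
    mul_coeff_neg_eq_zero huGneg hGinv.1 hj
  have hBFneg : ∀ j < 0, (lsDeriv F * F⁻¹).coeff j = 0 := fun j hj =>
    mul_coeff_neg_eq_zero hlFneg hFinv.1 hj
  have hBGneg : ∀ j < 0, (lsDeriv G * G⁻¹).coeff j = 0 := fun j hj =>
    mul_coeff_neg_eq_zero hlGneg hGinv.1 hj
  have hAF0 : (uDeriv F * F⁻¹).coeff 0 = lsDeriv (F.coeff 0) * (F.coeff 0)⁻¹ := by
    rw [mul_coeff_zero_eq huFneg hFinv.1, uDeriv_coeff, hFinv.2]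
  have hAG0 : (uDeriv G * G⁻¹).coeff 0 = lsDeriv (G.coeff 0) * (G.coeff 0)⁻¹ := by
    rw [mul_coeff_zero_eq huGneg hGinv.1, uDeriv_coeff, hGinv.2]
  -- the four coefficient computations
  have ht1 : (single (-1) (b • (1 : LS k)) * (uDeriv F * F⁻¹)).coeff (-1)
      = b • (lsDeriv (F.coeff 0) * (F.coeff 0)⁻¹) := by
    have h := HahnSeries.coeff_single_mul_add (r := b • (1 : LS k))
      (x := uDeriv F * F⁻¹) (a := 0) (b := -1)
    rw [zero_add] at h
    rw [h, hAF0, smul_one_mul']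
  have ht3 : (single (-1) (a • (1 : LS k)) * (uDeriv G * G⁻¹)).coeff (-1)
      = a • (lsDeriv (G.coeff 0) * (G.coeff 0)⁻¹) := by
    have h := HahnSeries.coeff_single_mul_add (r := a • (1 : LS k))
      (x := uDeriv G * G⁻¹) (a := 0) (b := -1)
    rw [zero_add] at h
    rw [h, hAG0, smul_one_mul']
  have ht2 : ((uDeriv F * F⁻¹) * (lsDeriv G * G⁻¹)).coeff (-1) = 0 :=
    mul_coeff_neg_eq_zero hAFneg hBGneg (by norm_num)
  have ht4 : ((lsDeriv F * F⁻¹) * (uDeriv G * G⁻¹)).coeff (-1) = 0 :=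
    mul_coeff_neg_eq_zero hBFneg hAGneg (by norm_num)
  -- the tame-symbol side
  have hmz1 : (single a (1 : LS k) * F) ^ b = (single a (1 : LS k)) ^ b * F ^ b :=
    mul_zpow (α := HahnSeries ℤ (HahnSeries ℤ k)) _ _ _
  have hmz2 : (single b (1 : LS k) * G) ^ (-a) = (single b (1 : LS k)) ^ (-a) * G ^ (-a) :=
    mul_zpow (α := HahnSeries ℤ (HahnSeries ℤ k)) _ _ _
  have hX2 : f ^ b * g ^ (-a) = F ^ b * G ^ (-a) := by
    conv_lhs => rw [hfF, hgG]
    rw [hmz1, hmz2, single_one_zpow, single_one_zpow]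
    calc single (b * a) (1 : LS k) * F ^ b * (single (-a * b) 1 * G ^ (-a))
        = (single (b * a) (1 : LS k) * single (-a * b) 1) * (F ^ b * G ^ (-a)) := by ring
      _ = F ^ b * G ^ (-a) := by
          rw [hUmul, show b * a + -a * b = 0 from by ring, HahnSeries.single_zero_one]
          ring
  have hpF := zpow_coeff hF0ne hFneg b
  have hpG := zpow_coeff hG0ne hGneg (-a)
  have hw0 : (f ^ b * g ^ (-a)).coeff 0 = (F.coeff 0) ^ b * (G.coeff 0) ^ (-a) := by
    rw [hX2, mul_coeff_zero_eq hpF.1 hpG.1, hpF.2, hpG.2]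
  have hεd : lsDeriv ((-1 : LS k) ^ (a * b)) = 0 := lsDeriv_neg_one_zpow (a * b)
  have hεne : ((-1 : LS k) ^ (a * b)) ≠ 0 := neg_one_zpow_ne_zero (a * b)
  have htame : lsDeriv ((-1 : LS k) ^ (a * b) * (f ^ b * g ^ (-a)).coeff 0)
      * ((-1 : LS k) ^ (a * b) * (f ^ b * g ^ (-a)).coeff 0)⁻¹
      = lsDeriv ((F.coeff 0) ^ b * (G.coeff 0) ^ (-a))
        * ((F.coeff 0) ^ b * (G.coeff 0) ^ (-a))⁻¹ := by
    rw [hw0, lsDeriv_mul, hεd, zero_mul, zero_add, mul_inv]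
    calc (-1 : LS k) ^ (a * b) * lsDeriv ((F.coeff 0) ^ b * (G.coeff 0) ^ (-a))
          * (((-1 : LS k) ^ (a * b))⁻¹ * ((F.coeff 0) ^ b * (G.coeff 0) ^ (-a))⁻¹)
        = ((-1 : LS k) ^ (a * b) * ((-1 : LS k) ^ (a * b))⁻¹)
          * (lsDeriv ((F.coeff 0) ^ b * (G.coeff 0) ^ (-a))
            * ((F.coeff 0) ^ b * (G.coeff 0) ^ (-a))⁻¹) := by ring
      _ = lsDeriv ((F.coeff 0) ^ b * (G.coeff 0) ^ (-a))
            * ((F.coeff 0) ^ b * (G.coeff 0) ^ (-a))⁻¹ := by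
          rw [mul_inv_cancel₀ hεne, one_mul]
  have hdlogw : lsDeriv ((F.coeff 0) ^ b * (G.coeff 0) ^ (-a))
      * ((F.coeff 0) ^ b * (G.coeff 0) ^ (-a))⁻¹
      = b • (lsDeriv (F.coeff 0) * (F.coeff 0)⁻¹)
        + (-a) • (lsDeriv (G.coeff 0) * (G.coeff 0)⁻¹) := by
    rw [dlog_mul (zpow_ne_zero _ hF0ne) (zpow_ne_zero _ hG0ne),
      dlog_zpow _ hF0ne, dlog_zpow _ hG0ne]
  -- putting everything together
  rw [hW, hAf, hBf, hAg, hBg, htame, hdlogw]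
  rw [show (uDeriv F * F⁻¹) * (single (-1) (b • (1 : LS k)) + lsDeriv G * G⁻¹)
      - (single (-1) (a • (1 : LS k)) + lsDeriv F * F⁻¹) * (uDeriv G * G⁻¹)
      = single (-1) (b • (1 : LS k)) * (uDeriv F * F⁻¹)
        - single (-1) (a • (1 : LS k)) * (uDeriv G * G⁻¹)
        + ((uDeriv F * F⁻¹) * (lsDeriv G * G⁻¹) - (lsDeriv F * F⁻¹) * (uDeriv G * G⁻¹))
    from by ring]
  rw [HahnSeries.coeff_add, HahnSeries.coeff_sub, HahnSeries.coeff_sub, ht1, ht2, ht3, ht4]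
  exact final_comb _ _ a b


/-- for ξ ∈ K̄ = k((t)) with ν_t(ξ) ≥ 0 and f, g ∈ K*,
res_{K̄/k}(ξ·d(f,g)_K/(f,g)_K) = res_{K/k}(ξ·(df/f)∧(dg/g)).
Here `LS2 k` realizes k((t))((u)) with outer variable u and inner variable t;
`uDeriv` is ∂/∂t (coefficientwise) and `lsDeriv` is ∂/∂u (outer), `res2` extracts
the coefficient of t⁻¹u⁻¹, and `HahnSeries.C ξ` is the embedding k((t)) ⊂ K. -/
theorem residue_of_tame_symbol (k : Type) [Field k] [CharZero k] (f g : LS2 k)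
    (hf : f ≠ 0) (hg : g ≠ 0) (ξ : LS k) (hξ : ∀ j < 0, ξ.coeff j = 0) :
    res1 (ξ * lsDeriv (tame2 f g) * (tame2 f g)⁻¹) =
      res2 ((HahnSeries.C ξ) * ((f * g)⁻¹ *
        (uDeriv f * lsDeriv g - lsDeriv f * uDeriv g))) := by
  have h := main_identity f g hf hg
  have h2 := HahnSeries.coeff_single_mul_add (r := ξ)
    (x := (f * g)⁻¹ * (uDeriv f * lsDeriv g - lsDeriv f * uDeriv g)) (a := -1) (b := 0)
  rw [add_zero] at h2
  unfold res1 res2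
  have hc : (HahnSeries.C ξ * ((f * g)⁻¹ * (uDeriv f * lsDeriv g - lsDeriv f * uDeriv g)))
      = (HahnSeries.single 0 ξ : LS2 k)
        * ((f * g)⁻¹ * (uDeriv f * lsDeriv g - lsDeriv f * uDeriv g)) := rfl
  rw [hc, h2, h, mul_assoc]

end
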